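/- Let X be a regular projective curve over a field k, and let V_• be a graded linear series on X such that V_n ≠ {0} for some n ≥ 1. Then ℕ(V_•) := {n ≥ 1 : V_n ≠ {0}} is a sub-semigroup of (ℕ_{≥1}, +), and for all sufficiently large n ∈ ℕ(V_•) the field k(V_n) generated by ratios of nonzero elements of V_n equals k(V_•). -/

import Mathlib

set_option maxHeartbeats 1000000
set_option synthInstance.maxHeartbeats 400000


open scoped BigOperators Classical

/-- An abstract package of the data attached to a regular projective curve `X` over a field
`k`: `F = Rat(X)` is the function field, `P = X^{(1)}` is the set of closed points,
`degp x = [k(x):k]`, `ord x f` is the order of vanishing of a nonzero rational function `f`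
at `x`, `H0 D` is the Riemann–Roch space of an ℝ-divisor `D : P → ℝ` (a `k`-subspace of
`F`), and `riemannRoch` is the Riemann–Roch estimate for integral divisors of large
degree. -/
structure CurveData (k F P : Type*) [Field k] [Field F] [Algebra k F] : Type _ where
  genus : ℕ
  degp : P → ℕ
  degp_pos : ∀ x, 0 < degp x
  ord : P → F → ℤ
  ord_mul : ∀ (x : P) {f g : F}, f ≠ 0 → g ≠ 0 → ord x (f * g) = ord x f + ord x g
  ord_support_finite : ∀ {f : F}, f ≠ 0 → (Function.support fun x => ord x f).Finite
  ord_deg_zero : ∀ {f : F}, f ≠ 0 → (∑ᶠ x, (ord x f : ℝ) * (degp x : ℝ)) = 0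
  finitely_generated : ∃ S : Finset F, IntermediateField.adjoin k (S : Set F) = ⊤
  H0 : (P → ℝ) → Submodule k F
  mem_H0 : ∀ (D : P → ℝ) (f : F), f ∈ H0 D ↔ (f ≠ 0 → ∀ x, 0 ≤ (ord x f : ℝ) + D x)
  H0_finite : ∀ D, Module.Finite k (H0 D)
  riemannRoch : ∀ D : P → ℝ, (Function.support D).Finite →
    (∀ x, ∃ n : ℤ, (n : ℝ) = D x) →
    2 * (genus : ℝ) - 2 < ∑ᶠ x, D x * (degp x : ℝ) →
    (Module.finrank k ↥(H0 D) : ℝ) = (∑ᶠ x, D x * (degp x : ℝ)) + 1 - genus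

variable {k F P : Type*} [Field k] [Field F] [Algebra k F]

/-- The degree of an ℝ-divisor `D`: `deg D = Σ_x D(x)·[k(x):k]`. -/
noncomputable def CurveData.degD (C : CurveData k F P) (D : P → ℝ) : ℝ :=
  ∑ᶠ x, D x * (C.degp x : ℝ)

/-- `E` is a principal ℝ-divisor, i.e. lies in the ℝ-linear span of the divisors of nonzero
rational functions (the image of `Rat(X)^×_ℝ → nDiv_ℝ(X)`). -/
def CurveData.IsPrincipalR (C : CurveData k F P) (E : P → ℝ) : Prop :=
  E ∈ Submodule.span ℝ {E' : P → ℝ | ∃ f : F, f ≠ 0 ∧ E' = fun x => (C.ord x f : ℝ)}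

/-- The set of ratios `f/g` of nonzero elements of a `k`-subspace `W` of `Rat(X)`. -/
def ratioSet (W : Submodule k F) : Set F :=
  {r : F | ∃ f ∈ W, ∃ g ∈ W, f ≠ 0 ∧ g ≠ 0 ∧ r = f / g}

/-- The pole divisor of `f`. -/
noncomputable def CurveData.poleDiv (C : CurveData k F P) (f : F) : P → ℝ :=
  fun x => ((max (-(C.ord x f)) 0 : ℤ) : ℝ)

lemma aux_ord_one (C : CurveData k F P) (x : P) : C.ord x 1 = 0 := by
  have h := C.ord_mul x (one_ne_zero (α := F)) (one_ne_zero (α := F))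
  rw [mul_one] at h; omega

lemma aux_ord_pow (C : CurveData k F P) (x : P) {f : F} (hf : f ≠ 0) (n : ℕ) :
    C.ord x (f ^ n) = n * C.ord x f := by
  induction n with
  | zero => simpa using aux_ord_one C x
  | succ n ih =>
    rw [pow_succ, C.ord_mul x (pow_ne_zero n hf) hf, ih]; push_cast; ring

lemma aux_poleDiv_nonneg (C : CurveData k F P) (f : F) (x : P) : 0 ≤ C.poleDiv f x := by
  unfold CurveData.poleDiv; positivity

lemma aux_poleDiv_support (C : CurveData k F P) {f : F} (hf : f ≠ 0) :
    (Function.support (C.poleDiv f)).Finite := by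
  apply (C.ord_support_finite hf).subset
  intro x hx
  simp only [Function.mem_support, CurveData.poleDiv] at hx ⊢
  intro h0
  apply hx
  rw [h0]
  simp

lemma aux_ord_ge_neg_poleDiv (C : CurveData k F P) (f : F) (x : P) :
    -(C.poleDiv f x) ≤ (C.ord x f : ℝ) := by
  unfold CurveData.poleDiv
  have h : -(C.ord x f) ≤ max (-(C.ord x f)) 0 := le_max_left _ _
  have h2 : ((-(C.ord x f) : ℤ) : ℝ) ≤ ((max (-(C.ord x f)) 0 : ℤ) : ℝ) := by exact_mod_cast h
  push_cast at h2 ⊢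
  linarith

lemma aux_degD_nonneg (C : CurveData k F P) {D : P → ℝ}
    (hfin : (Function.support D).Finite) (h0 : ∀ x, 0 ≤ D x) : 0 ≤ C.degD D := by
  unfold CurveData.degD
  have hsub : Function.support (fun x => D x * (C.degp x : ℝ)) ⊆ hfin.toFinset := by
    intro x hx
    simp only [Function.mem_support] at hx
    simp only [Set.Finite.coe_toFinset, Function.mem_support]
    intro h; apply hx; rw [h, zero_mul]
  rw [finsum_eq_sum_of_support_subset _ hsub]
  exact Finset.sum_nonneg fun x _ => mul_nonneg (h0 x) (by positivity)

lemma aux_degD_zero (C : CurveData k F P) {D : P → ℝ}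
    (hfin : (Function.support D).Finite) (h0 : ∀ x, 0 ≤ D x) (hdeg : C.degD D ≤ 0) :
    ∀ x, D x = 0 := by
  unfold CurveData.degD at hdeg
  have hsub : Function.support (fun x => D x * (C.degp x : ℝ)) ⊆ hfin.toFinset := by
    intro x hx
    simp only [Function.mem_support] at hx
    simp only [Set.Finite.coe_toFinset, Function.mem_support]
    intro h; apply hx; rw [h, zero_mul]
  rw [finsum_eq_sum_of_support_subset _ hsub] at hdeg
  have hterm : ∀ x ∈ hfin.toFinset, D x * (C.degp x : ℝ) = 0 := by
    by_contra hcon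
    push_neg at hcon
    obtain ⟨x, hx, hne⟩ := hcon
    have hpos : 0 < D x * (C.degp x : ℝ) :=
      lt_of_le_of_ne (mul_nonneg (h0 x) (by positivity)) (Ne.symm hne)
    have : 0 < ∑ y ∈ hfin.toFinset, D y * (C.degp y : ℝ) :=
      Finset.sum_pos' (fun y _ => mul_nonneg (h0 y) (by positivity)) ⟨x, hx, hpos⟩
    linarith
  intro x
  by_cases hx : x ∈ hfin.toFinset
  · have := hterm x hx
    have hdp : (0:ℝ) < (C.degp x : ℝ) := by exact_mod_cast C.degp_pos x
    rcases mul_eq_zero.mp this with h | h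
    · exact h
    · linarith
  · simp only [Set.Finite.mem_toFinset, Function.mem_support, not_not] at hx
    exact hx

lemma aux_degD_smul (C : CurveData k F P) (t : ℝ) {D : P → ℝ}
    (hfin : (Function.support D).Finite) :
    C.degD (fun x => t * D x) = t * C.degD D := by
  unfold CurveData.degD
  rw [mul_finsum _ t]
  apply finsum_congr
  intro x; ring

lemma aux_degD_add (C : CurveData k F P) {D E : P → ℝ}
    (hD : (Function.support D).Finite) (hE : (Function.support E).Finite) :
    C.degD (fun x => D x + E x) = C.degD D + C.degD E := by
  unfold CurveData.degD
  have h1 : (Function.support fun x => D x * (C.degp x : ℝ)).Finite :=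
    hD.subset (by intro x hx; simp only [Function.mem_support] at hx ⊢
                  intro h; apply hx; rw [h, zero_mul])
  have h2 : (Function.support fun x => E x * (C.degp x : ℝ)).Finite :=
    hE.subset (by intro x hx; simp only [Function.mem_support] at hx ⊢
                  intro h; apply hx; rw [h, zero_mul])
  rw [← finsum_add_distrib h1 h2]
  apply finsum_congr
  intro x; ring

lemma aux_card_le (C : CurveData k F P) (D : P → ℝ) {ι : Type*} [Fintype ι] (v : ι → F)
    (hv : ∀ i, v i ∈ C.H0 D) (hind : LinearIndependent k v) :
    Fintype.card ι ≤ Module.finrank k (C.H0 D) := by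
  haveI := C.H0_finite D
  have h2 : LinearIndependent k (fun i => (⟨v i, hv i⟩ : C.H0 D)) :=
    LinearIndependent.of_comp ((C.H0 D).subtype) hind
  exact h2.fintype_card_le_finrank

lemma aux_stabilize {R M : Type*} [Field R] [AddCommGroup M] [Module R M]
    (T : Submodule R M) (hT : Module.Finite R T) (W : ℕ → Submodule R M) (S : Set ℕ)
    (hsub : ∀ n ∈ S, W n ≤ T)
    (hadd : ∀ m ∈ S, ∀ n ∈ S, m + n ∈ S)
    (hmono : ∀ m ∈ S, ∀ n ∈ S, W m ≤ W (m + n))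
    (hne : S.Nonempty) :
    ∃ n₀ ∈ S, ∀ m ∈ S, W m ≤ W n₀ := by
  classical
  haveI := hT
  haveI hfd : ∀ n ∈ S, FiniteDimensional R (W n) := fun n hn =>
    Submodule.finiteDimensional_of_le (hsub n hn)
  set A : Set ℕ := (fun n => Module.finrank R (W n)) '' S with hA
  have hAne : A.Nonempty := hne.image _
  have hAbdd : BddAbove A := by
    refine ⟨Module.finrank R T, ?_⟩
    rintro d ⟨n, hn, rfl⟩
    haveI := hfd n hn
    exact Submodule.finrank_mono (hsub n hn)
  have hmem := Nat.sSup_mem hAne hAbdd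
  obtain ⟨n₀, hn₀S, hn₀⟩ := hmem
  refine ⟨n₀, hn₀S, ?_⟩
  intro m hm
  have h1 : W n₀ ≤ W (n₀ + m) := hmono n₀ hn₀S m hm
  have h2 : Module.finrank R (W (n₀ + m)) ≤ Module.finrank R (W n₀) := by
    have : Module.finrank R (W n₀) = sSup A := hn₀
    rw [this]
    exact le_csSup hAbdd ⟨n₀ + m, hadd n₀ hn₀S m hm, rfl⟩
  haveI := hfd (n₀ + m) (hadd n₀ hn₀S m hm)
  have heq : W (n₀ + m) = W n₀ := (Submodule.eq_of_le_of_finrank_le h1 h2).symm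
  calc W m ≤ W (m + n₀) := hmono m hm n₀ hn₀S
    _ = W (n₀ + m) := by rw [add_comm]
    _ = W n₀ := heq


/-- Sub-semigroups of `ℕ≥1` contain all sufficiently large multiples of their gcd. -/
lemma aux_nat_semigroup (S : Set ℕ) (hS1 : ∀ a ∈ S, 1 ≤ a)
    (hadd : ∀ a ∈ S, ∀ b ∈ S, a + b ∈ S) (hne : S.Nonempty) :
    ∃ e N : ℕ, 0 < e ∧ (∀ a ∈ S, e ∣ a) ∧ (∀ n, N ≤ n → e ∣ n → n ∈ S) := by
  classical
  set M := AddSubmonoid.closure S with hMdef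
  have hMS : ∀ x ∈ M, x = 0 ∨ x ∈ S := by
    intro x hx
    induction hx using AddSubmonoid.closure_induction with
    | mem y hy => exact Or.inr hy
    | zero => exact Or.inl rfl
    | add y z _ _ hy hz =>
      rcases hy with rfl | hy
      · simpa using hz
      · rcases hz with rfl | hz
        · exact Or.inr (by simpa using hy)
        · exact Or.inr (hadd _ hy _ hz)
  obtain ⟨a₀, ha₀⟩ := hne
  set G := AddSubgroup.closure ((fun n : ℕ => (n : ℤ)) '' S) with hGdef
  obtain ⟨g, hg⟩ := Int.subgroup_cyclic G
  have hdvdZ : ∀ a ∈ S, g ∣ (a : ℤ) := by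
    intro a ha
    have h1 : (a : ℤ) ∈ G := AddSubgroup.subset_closure ⟨a, ha, rfl⟩
    rw [hg, AddSubgroup.mem_closure_singleton] at h1
    obtain ⟨n, hn⟩ := h1
    exact ⟨n, by rw [← hn, zsmul_eq_mul]; push_cast; ring⟩
  set e := g.natAbs with hedef
  have hdvd : ∀ a ∈ S, e ∣ a := by
    intro a ha
    have := (Int.natAbs_dvd).mpr (hdvdZ a ha)
    exact_mod_cast this
  have he : 0 < e := by
    rcases Nat.eq_zero_or_pos e with h0 | h
    · exfalso
      have hg0 : g = 0 := Int.natAbs_eq_zero.mp h0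
      obtain ⟨c, hc⟩ := hdvdZ a₀ ha₀
      rw [hg0, zero_mul] at hc
      have := hS1 a₀ ha₀
      omega
    · exact h
  -- g = A - B with A B ∈ M
  set H : AddSubgroup ℤ :=
    { carrier := {x | ∃ A ∈ M, ∃ B ∈ M, x = (A : ℤ) - (B : ℤ)}
      zero_mem' := ⟨0, zero_mem _, 0, zero_mem _, by simp⟩
      add_mem' := by
        rintro x y ⟨A, hA, B, hB, rfl⟩ ⟨A', hA', B', hB', rfl⟩
        exact ⟨A + A', add_mem hA hA', B + B', add_mem hB hB', by push_cast; ring⟩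
      neg_mem' := by
        rintro x ⟨A, hA, B, hB, rfl⟩
        exact ⟨B, hB, A, hA, by ring⟩ } with hHdef
  have hGH : G ≤ H := by
    rw [hGdef]
    apply (AddSubgroup.closure_le _).mpr
    rintro x ⟨a, ha, rfl⟩
    exact ⟨a, AddSubmonoid.subset_closure ha, 0, zero_mem _, by simp⟩
  have hgH : g ∈ H := by
    apply hGH
    rw [hg]
    exact AddSubgroup.mem_closure_singleton.mpr ⟨1, one_smul _ _⟩
  obtain ⟨A, hA, B, hB, hAB⟩ := hgH
  -- get a' = b' + e with a', b' ∈ M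
  have habs : (e : ℤ) = (A : ℤ) - B ∨ (e : ℤ) = (B : ℤ) - A := by
    have hX : (e : ℤ) = g.natAbs := rfl
    rcases Int.natAbs_eq g with h | h
    · left; omega
    · right; omega
  obtain ⟨a', ha', b', hb', hab⟩ : ∃ a' ∈ M, ∃ b' ∈ M, a' = b' + e := by
    rcases habs with h | h
    · exact ⟨A, hA, B, hB, by omega⟩
    · exact ⟨B, hB, A, hA, by omega⟩
  have hbe : e ∣ b' := by
    rcases hMS b' hb' with rfl | h
    · exact Nat.dvd_zero e
    · exact hdvd b' h
  obtain ⟨c, hc⟩ := hbe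
  refine ⟨e, e * (c + 1) * (c + 1), he, hdvd, ?_⟩
  intro n hN hdn
  obtain ⟨t, ht⟩ := hdn
  have htc : (c + 1) * (c + 1) ≤ t := by
    have : e * ((c + 1) * (c + 1)) ≤ e * t := by rw [← ht]; nlinarith [hN]
    exact Nat.le_of_mul_le_mul_left this he
  have hnM : n ∈ M := by
    rcases Nat.eq_zero_or_pos c with rfl | hcpos
    · -- b' = 0, a' = e
      have ha'e : a' = e := by omega
      have hmem : t • a' ∈ M := M.nsmul_mem ha' t
      have h2 : t • a' = n := by rw [smul_eq_mul, ha'e, ht, mul_comm]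
      rwa [h2] at hmem
    · set x := t % c with hxdef
      set s := t / c with hsdef
      have hts : t = c * s + x := (Nat.div_add_mod t c).symm
      have hxc : x < c := Nat.mod_lt _ hcpos
      have hsc : c ≤ s := by
        rw [hsdef, Nat.le_div_iff_mul_le hcpos]
        nlinarith
      set y := s - x with hydef
      have hxy : x + y = s := by omega
      have key : x • a' + y • b' = n := by
        rw [smul_eq_mul, smul_eq_mul, hab, hc]
        have : x * (e * c + e) + y * (e * c) = e * (c * (x + y) + x) := by ring
        rw [this, hxy, ← hts, ← ht]
      rw [← key]
      exact add_mem (M.nsmul_mem ha' x) (M.nsmul_mem hb' y)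
  rcases hMS n hnM with rfl | h
  · exfalso; nlinarith [hN]
  · exact h


/-- Powers of a transcendental element are linearly independent (coefficient form). -/
lemma aux_powers_ind {K L : Type*} [Field K] [Field L] [Algebra K L] {x : L}
    (hx : Transcendental K x) {t : ℕ} (g : Fin t → K)
    (hsum : ∑ j, g j • x ^ (j : ℕ) = 0) : ∀ j, g j = 0 := by
  classical
  have hinj := transcendental_iff.mp hx
  set p : Polynomial K := ∑ j : Fin t, Polynomial.C (g j) * Polynomial.X ^ (j : ℕ) with hp
  have hev : Polynomial.aeval x p = 0 := by
    rw [hp, map_sum]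
    simp only [map_mul, map_pow, Polynomial.aeval_C, Polynomial.aeval_X, ← Algebra.smul_def]
    exact hsum
  have hp0 : p = 0 := hinj p hev
  intro j
  have hco := congrArg (fun q => Polynomial.coeff q (j : ℕ)) hp0
  simp only [hp, Polynomial.finset_sum_coeff, Polynomial.coeff_C_mul, Polynomial.coeff_X_pow,
    Polynomial.coeff_zero] at hco
  rw [Finset.sum_eq_single j] at hco
  · simpa using hco
  · intro b _ hbj
    have : ((j : ℕ) = (b : ℕ)) = False := by
      simp only [eq_iff_iff, iff_false]
      exact fun h => hbj (Fin.ext h.symm)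
    simp [this]
  · simp

/-- Products `a i * b j` with `a i ∈ E` independent over `k` and `b j` independent over `E`
are independent over `k`. -/
lemma aux_prod_ind (E : IntermediateField k F) {m t : ℕ} (a : Fin m → F) (b : Fin t → F)
    (haE : ∀ i, a i ∈ E)
    (hai : ∀ g : Fin m → k, ∑ i, g i • a i = 0 → ∀ i, g i = 0)
    (hbi : ∀ h : Fin t → E, ∑ j, h j • b j = 0 → ∀ j, h j = 0) :
    LinearIndependent k fun p : Fin m × Fin t => a p.1 * b p.2 := by
  classical
  rw [Fintype.linearIndependent_iff]
  intro g hg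
  set h : Fin t → E := fun j =>
    ⟨∑ i, g (i, j) • a i, sum_mem fun i _ => E.toSubalgebra.smul_mem (haE i) _⟩ with hh
  have hsum : ∑ j, h j • b j = 0 := by
    have hrw : ∑ j, h j • b j = ∑ p : Fin m × Fin t, g p • (a p.1 * b p.2) := by
      rw [Fintype.sum_prod_type_right]
      apply Finset.sum_congr rfl
      intro j _
      have : (h j : F) • b j = (↑(h j) : F) * b j := by rw [smul_eq_mul]
      rw [show h j • b j = (↑(h j) : F) * b j from by
        rw [Algebra.smul_def]; rfl]
      rw [hh]
      simp only [Finset.sum_mul]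
      apply Finset.sum_congr rfl
      intro i _
      rw [smul_mul_assoc]
    rw [hrw, hg]
  have h0 := hbi h hsum
  intro p
  have hcoe : (↑(h p.2) : F) = 0 := by rw [h0 p.2]; rfl
  rw [hh] at hcoe
  exact hai (fun i => g (i, p.2)) (by simpa using hcoe) p.1


/-- A transcendental element has poles, of positive degree. -/
lemma aux_poleDeg_pos (C : CurveData k F P) {f : F} (hf : Transcendental k f) :
    0 < C.degD (C.poleDiv f) := by
  classical
  have hf0 : f ≠ 0 := by
    intro h; exact hf (h ▸ isAlgebraic_zero)
  have hfin := aux_poleDiv_support C hf0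
  rcases lt_or_ge 0 (C.degD (C.poleDiv f)) with h | h
  · exact h
  · exfalso
    have hD0 : ∀ x, C.poleDiv f x = 0 := aux_degD_zero C hfin (aux_poleDiv_nonneg C f) h
    -- then all powers of f lie in H0 (poleDiv f)
    have hmem : ∀ i : ℕ, f ^ i ∈ C.H0 (C.poleDiv f) := by
      intro i
      rw [C.mem_H0]
      intro _ x
      rw [aux_ord_pow C x hf0 i, hD0 x]
      have h1 := aux_ord_ge_neg_poleDiv C f x
      rw [hD0 x] at h1
      push_cast
      have : (0:ℝ) ≤ (C.ord x f : ℝ) := by simpa using h1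
      positivity
    haveI := C.H0_finite (C.poleDiv f)
    set N := Module.finrank k (C.H0 (C.poleDiv f)) with hN
    have hind : LinearIndependent k fun i : Fin (N + 1) => f ^ (i : ℕ) := by
      rw [Fintype.linearIndependent_iff]
      intro g hg
      exact aux_powers_ind hf g hg
    have hcle := aux_card_le C (C.poleDiv f) (fun i : Fin (N + 1) => f ^ (i : ℕ))
      (fun i => hmem (i : ℕ)) hind
    simp only [Fintype.card_fin] at hcle
    omega

/-- Key: on a "curve", any element is algebraic over `k⟮u⟯` for `u` transcendental. -/
lemma aux_alg_adjoin (C : CurveData k F P) {u : F} (hu : Transcendental k u) (s : F) :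
    IsAlgebraic (IntermediateField.adjoin k {u}) s := by
  classical
  by_contra hs
  have hs' : Transcendental (IntermediateField.adjoin k {u}) s := hs
  have hu0 : u ≠ 0 := fun h => hu (h ▸ isAlgebraic_zero)
  have hs0 : s ≠ 0 := by
    intro h
    exact hs (h ▸ isAlgebraic_zero)
  set D : P → ℝ := fun x => C.poleDiv u x + C.poleDiv s x with hD
  have hfinD : (Function.support D).Finite := by
    apply ((aux_poleDiv_support C hu0).union (aux_poleDiv_support C hs0)).subset
    intro x hx
    simp only [Function.mem_support, hD] at hx
    by_contra hcon
    simp only [Set.mem_union, Function.mem_support, not_or, not_not] at hcon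
    exact hx (by rw [hcon.1, hcon.2, add_zero])
  have hD0 : ∀ x, 0 ≤ D x := fun x =>
    add_nonneg (aux_poleDiv_nonneg C u x) (aux_poleDiv_nonneg C s x)
  -- monomials lie in H0 of t • D
  have hmem : ∀ t i j : ℕ, i ≤ t → j ≤ t →
      u ^ i * s ^ j ∈ C.H0 (fun x => (t : ℝ) * D x) := by
    intro t i j hit hjt
    rw [C.mem_H0]
    intro _ x
    rw [C.ord_mul x (pow_ne_zero i hu0) (pow_ne_zero j hs0),
      aux_ord_pow C x hu0 i, aux_ord_pow C x hs0 j]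
    have h1 := aux_ord_ge_neg_poleDiv C u x
    have h2 := aux_ord_ge_neg_poleDiv C s x
    have hpu := aux_poleDiv_nonneg C u x
    have hps := aux_poleDiv_nonneg C s x
    have hiu : -(i : ℝ) * C.poleDiv u x ≤ (i : ℝ) * (C.ord x u : ℝ) := by nlinarith
    have hjs : -(j : ℝ) * C.poleDiv s x ≤ (j : ℝ) * (C.ord x s : ℝ) := by nlinarith
    have hit' : (i : ℝ) ≤ (t : ℝ) := by exact_mod_cast hit
    have hjt' : (j : ℝ) ≤ (t : ℝ) := by exact_mod_cast hjt
    have hiu2 : (i : ℝ) * C.poleDiv u x ≤ (t : ℝ) * C.poleDiv u x := by nlinarith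
    have hjs2 : (j : ℝ) * C.poleDiv s x ≤ (t : ℝ) * C.poleDiv s x := by nlinarith
    push_cast
    simp only [hD]
    nlinarith
  -- monomials are independent
  have hind : ∀ t : ℕ, LinearIndependent k
      fun p : Fin (t + 1) × Fin (t + 1) => u ^ (p.1 : ℕ) * s ^ (p.2 : ℕ) := by
    intro t
    exact aux_prod_ind (IntermediateField.adjoin k {u})
      (fun i : Fin (t + 1) => u ^ (i : ℕ)) (fun j : Fin (t + 1) => s ^ (j : ℕ))
      (fun i => pow_mem (IntermediateField.mem_adjoin_simple_self k u) _)
      (fun g hg => aux_powers_ind hu g hg)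
      (fun h hsum => aux_powers_ind hs' h hsum)
  have hcard : ∀ t : ℕ, (t + 1) * (t + 1) ≤
      Module.finrank k (C.H0 (fun x => (t : ℝ) * D x)) := by
    intro t
    have := aux_card_le C (fun x => (t : ℝ) * D x)
      (fun p : Fin (t + 1) × Fin (t + 1) => u ^ (p.1 : ℕ) * s ^ (p.2 : ℕ))
      (fun p => hmem t _ _ (by omega) (by omega)) (hind t)
    simpa [Fintype.card_prod, Fintype.card_fin] using this
  rcases lt_or_ge 0 (C.degD D) with hc | hc
  · -- positive degree : Riemann-Roch gives linear growth, contradiction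
    set c := C.degD D with hcdef
    set g := (C.genus : ℝ) with hgdef
    obtain ⟨t, ht⟩ := exists_nat_gt (max ((2 * g - 2) / c) c)
    have htc : (t : ℝ) > (2 * g - 2) / c := lt_of_le_of_lt (le_max_left _ _) ht
    have htc2 : (t : ℝ) > c := lt_of_le_of_lt (le_max_right _ _) ht
    have hdeg1 : C.degD (fun x => (t : ℝ) * D x) = (t : ℝ) * c := aux_degD_smul C _ hfinD
    have hrr0 := C.riemannRoch (fun x => (t : ℝ) * D x)
      (hfinD.subset (by
        intro x hx
        simp only [Function.mem_support] at hx ⊢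
        intro hcon; exact hx (by rw [hcon, mul_zero])))
      (by
        intro x
        refine ⟨t * (max (-(C.ord x u)) 0 + max (-(C.ord x s)) 0), ?_⟩
        simp only [hD, CurveData.poleDiv]
        push_cast
        ring)
      (by
        show 2 * (C.genus : ℝ) - 2 < C.degD (fun x => (t : ℝ) * D x)
        rw [hdeg1]
        have h3 : 2 * g - 2 < (t : ℝ) * c := by
          have h4 := (div_lt_iff₀ hc).mp htc
          linarith
        rw [hgdef] at h3
        linarith)
    have hrr : (Module.finrank k (C.H0 (fun x => (t : ℝ) * D x)) : ℝ)
        = (t : ℝ) * c + 1 - g := by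
      rw [← hdeg1]; exact hrr0
    have hcb := hcard t
    have hcb' : ((t + 1) * (t + 1) : ℝ) ≤ (Module.finrank k (C.H0 (fun x => (t : ℝ) * D x)) : ℝ) := by
      exact_mod_cast hcb
    rw [hrr] at hcb'
    have htpos : (0:ℝ) < t := lt_trans hc htc2
    have hlt : (t : ℝ) * c < (t : ℝ) * ((t : ℝ) + 2) := by nlinarith
    have hg0 : 0 ≤ g := by rw [hgdef]; positivity
    nlinarith
  · -- degree zero : D = 0 and all the spaces coincide
    have hDz : ∀ x, D x = 0 := aux_degD_zero C hfinD hD0 hc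
    have hsame : ∀ t : ℕ, (fun x => (t : ℝ) * D x) = (fun x => (0 : ℝ) * D x) := by
      intro t; funext x; rw [hDz x]; ring
    haveI := C.H0_finite (fun x => (0 : ℝ) * D x)
    set N := Module.finrank k (C.H0 (fun x => (0 : ℝ) * D x)) with hNdef
    have := hcard N
    rw [hsame N] at this
    nlinarith

/-- The relative algebraic closure of `k` in `F` as an intermediate field. -/
noncomputable def algCl (k F : Type*) [Field k] [Field F] [Algebra k F] :
    IntermediateField k F :=
  { integralClosure k F with
    inv_mem' := fun x hx => IsIntegral.inv_mem hx hx }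

lemma mem_algCl_of_isIntegral {x : F} (hx : IsIntegral k x) : x ∈ algCl k F := hx

lemma aux_algCl_isIntegral : Algebra.IsIntegral k (algCl k F) :=
  ⟨fun x => (isIntegral_algHom_iff (algCl k F).val Subtype.val_injective).mp x.2⟩

/-- The algebraic closure of `k` in `F` is finite-dimensional over `k`. -/
lemma aux_algclosure_finite (C : CurveData k F P) : FiniteDimensional k (algCl k F) := by
  classical
  by_cases hf : ∃ f₀ : F, Transcendental k f₀
  · obtain ⟨f₀, hf₀⟩ := hf
    have hf₀0 : f₀ ≠ 0 := fun h => hf₀ (h ▸ isAlgebraic_zero)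
    set c := C.degD (C.poleDiv f₀) with hcdef
    have hcpos : 0 < c := aux_poleDeg_pos C hf₀
    have hDfin := aux_poleDiv_support C hf₀0
    haveI : Algebra.IsIntegral k (algCl k F) := aux_algCl_isIntegral
    have hftr : Transcendental (algCl k F) f₀ := by
      intro halg
      exact hf₀ (isIntegral_trans (A := algCl k F) f₀ halg.isIntegral).isAlgebraic
    have hbound : ∀ s : Finset (algCl k F),
        (LinearIndependent k fun i : s => (i : algCl k F)) → s.card ≤ Nat.floor c + 1 := by
      intro s hli
      by_contra hcon
      push_neg at hcon
      set m := s.card with hm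
      set e0 := s.equivFin with he0
      set a : Fin m → F := fun i => ((e0.symm i : algCl k F) : F) with ha
      have haA : ∀ i, a i ∈ algCl k F := fun i => (e0.symm i : algCl k F).2
      have hliF : LinearIndependent k a := by
        have h1 : LinearIndependent k fun i : s => ((i : algCl k F) : F) :=
          hli.map' (algCl k F).val.toLinearMap
            (LinearMap.ker_eq_bot.mpr Subtype.val_injective)
        exact h1.comp e0.symm e0.symm.injective
      have hai : ∀ g : Fin m → k, ∑ i, g i • a i = 0 → ∀ i, g i = 0 :=
        Fintype.linearIndependent_iff.mp hliF
      have ha0 : ∀ i, a i ≠ 0 := fun i => hliF.ne_zero i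
      -- pole bound for the family
      set Ea : P → ℝ :=
        fun x => ((Finset.univ.sup fun i : Fin m => (-(C.ord x (a i))).toNat : ℕ) : ℝ) with hEa
      have hEafin : (Function.support Ea).Finite := by
        apply (Set.finite_iUnion (fun i : Fin m =>
          C.ord_support_finite (ha0 i))).subset
        intro x hx
        simp only [Function.mem_support, hEa] at hx
        by_contra hcon2
        simp only [Set.mem_iUnion, Function.mem_support, not_exists, not_not] at hcon2
        apply hx
        have hsup0 : (Finset.univ.sup fun i : Fin m => (-(C.ord x (a i))).toNat) = 0 := by
          apply Nat.le_zero.mp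
          apply Finset.sup_le
          intro i _
          rw [hcon2 i]
          simp
        rw [hsup0]
        simp
      have hEa0 : ∀ x, 0 ≤ Ea x := by intro x; rw [hEa]; positivity
      have hEabd : ∀ i x, -(Ea x) ≤ (C.ord x (a i) : ℝ) := by
        intro i x
        have h1 : (-(C.ord x (a i))).toNat ≤
            Finset.univ.sup fun i : Fin m => (-(C.ord x (a i))).toNat :=
          Finset.le_sup (f := fun i : Fin m => (-(C.ord x (a i))).toNat) (Finset.mem_univ i)
        have h2 : (-(C.ord x (a i))) ≤ ((-(C.ord x (a i))).toNat : ℤ) := Int.self_le_toNat _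
        have h3 : ((-(C.ord x (a i)) : ℤ) : ℝ) ≤ Ea x := by
          show ((-(C.ord x (a i)) : ℤ) : ℝ) ≤
            ((Finset.univ.sup fun j : Fin m => (-(C.ord x (a j))).toNat : ℕ) : ℝ)
          calc ((-(C.ord x (a i)) : ℤ) : ℝ) ≤ (((-(C.ord x (a i))).toNat : ℤ) : ℝ) := by
                exact_mod_cast h2
            _ ≤ _ := by exact_mod_cast h1
        push_cast at h3
        linarith
      set e := C.degD Ea with hedef
      -- monomials
      have hmem : ∀ t : ℕ, ∀ (i : Fin m) (j : ℕ), j ≤ t →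
          a i * f₀ ^ j ∈ C.H0 (fun x => (t : ℝ) * C.poleDiv f₀ x + Ea x) := by
        intro t i j hjt
        rw [C.mem_H0]
        intro _ x
        rw [C.ord_mul x (ha0 i) (pow_ne_zero j hf₀0), aux_ord_pow C x hf₀0 j]
        have h1 := hEabd i x
        have h2 := aux_ord_ge_neg_poleDiv C f₀ x
        have hp0 := aux_poleDiv_nonneg C f₀ x
        have hjt' : (j : ℝ) ≤ (t : ℝ) := by exact_mod_cast hjt
        have h3 : -(j : ℝ) * C.poleDiv f₀ x ≤ (j : ℝ) * (C.ord x f₀ : ℝ) := by nlinarith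
        have h4 : (j : ℝ) * C.poleDiv f₀ x ≤ (t : ℝ) * C.poleDiv f₀ x := by nlinarith
        push_cast
        nlinarith
      have hind : ∀ t : ℕ, LinearIndependent k
          fun p : Fin m × Fin (t + 1) => a p.1 * f₀ ^ (p.2 : ℕ) := by
        intro t
        exact aux_prod_ind (algCl k F) a (fun j : Fin (t + 1) => f₀ ^ (j : ℕ))
          haA hai (fun h hsum => aux_powers_ind hftr h hsum)
      have hcard : ∀ t : ℕ, m * (t + 1) ≤
          Module.finrank k (C.H0 (fun x => (t : ℝ) * C.poleDiv f₀ x + Ea x)) := by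
        intro t
        have := aux_card_le C (fun x => (t : ℝ) * C.poleDiv f₀ x + Ea x)
          (fun p : Fin m × Fin (t + 1) => a p.1 * f₀ ^ (p.2 : ℕ))
          (fun p => hmem t p.1 _ (by omega)) (hind t)
        simpa [Fintype.card_prod, Fintype.card_fin] using this
      -- numeric contradiction
      have hmc : c < (m : ℝ) := by
        have h1 : c < (Nat.floor c + 1 : ℕ) := by
          push_cast
          exact Nat.lt_floor_add_one c
        have h2 : ((Nat.floor c + 1 : ℕ) : ℝ) ≤ (m : ℝ) := by exact_mod_cast le_of_lt hcon
        linarith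
      set g := (C.genus : ℝ) with hgdef
      obtain ⟨t, ht⟩ := exists_nat_gt (max ((2 * g - 2 - e) / c) ((e + 1) / ((m : ℝ) - c)))
      have htc : (2 * g - 2 - e) / c < (t : ℝ) := lt_of_le_of_lt (le_max_left _ _) ht
      have htm : (e + 1) / ((m : ℝ) - c) < (t : ℝ) := lt_of_le_of_lt (le_max_right _ _) ht
      have hfinDt : (Function.support fun x => (t : ℝ) * C.poleDiv f₀ x + Ea x).Finite := by
        apply (hDfin.union hEafin).subset
        intro x hx
        simp only [Function.mem_support] at hx
        by_contra hcon2
        simp only [Set.mem_union, Function.mem_support, not_or, not_not] at hcon2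
        exact hx (by rw [hcon2.1, hcon2.2]; ring)
      have hdegDt : C.degD (fun x => (t : ℝ) * C.poleDiv f₀ x + Ea x) = (t : ℝ) * c + e := by
        rw [aux_degD_add C (hDfin.subset (by
              intro x hx
              simp only [Function.mem_support] at hx ⊢
              intro hcon2; exact hx (by rw [hcon2, mul_zero]))) hEafin,
          aux_degD_smul C _ hDfin]
      have hrr0 := C.riemannRoch (fun x => (t : ℝ) * C.poleDiv f₀ x + Ea x) hfinDt
        (by
          intro x
          refine ⟨t * max (-(C.ord x f₀)) 0 +
            (Finset.univ.sup fun i : Fin m => (-(C.ord x (a i))).toNat : ℕ), ?_⟩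
          simp only [CurveData.poleDiv, hEa]
          push_cast
          ring)
        (by
          show 2 * (C.genus : ℝ) - 2 < C.degD (fun x => (t : ℝ) * C.poleDiv f₀ x + Ea x)
          rw [hdegDt]
          have h4 := (div_lt_iff₀ hcpos).mp htc
          linarith [hgdef])
      have hrr : (Module.finrank k (C.H0 (fun x => (t : ℝ) * C.poleDiv f₀ x + Ea x)) : ℝ)
          = (t : ℝ) * c + e + 1 - g := by
        rw [← hdegDt, hgdef]
        exact hrr0
      have hcb := hcard t
      have hcb' : ((m : ℝ)) * ((t : ℝ) + 1) ≤ (t : ℝ) * c + e + 1 - g := by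
        have : ((m * (t + 1) : ℕ) : ℝ) ≤
            (Module.finrank k (C.H0 (fun x => (t : ℝ) * C.poleDiv f₀ x + Ea x)) : ℝ) := by
          exact_mod_cast hcb
        rw [hrr] at this
        push_cast at this
        linarith
      have h5 : e + 1 < (t : ℝ) * ((m : ℝ) - c) := by
        have := (div_lt_iff₀ (by linarith : (0:ℝ) < (m : ℝ) - c)).mp htm
        linarith
      have hg0 : 0 ≤ g := by rw [hgdef]; positivity
      have hm0 : 0 ≤ (m : ℝ) := by positivity
      nlinarith
    have hrank : Module.rank k (algCl k F) < Cardinal.aleph0 :=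
      calc Module.rank k (algCl k F) ≤ ((Nat.floor c + 1 : ℕ) : Cardinal) := rank_le hbound
        _ < Cardinal.aleph0 := Cardinal.nat_lt_aleph0 _
    exact Module.rank_lt_aleph0_iff.mp hrank
  · -- no transcendental element : F itself is finite over k
    have hall : ∀ x : F, IsIntegral k x := by
      intro x
      have h1 : ¬Transcendental k x := fun h => hf ⟨x, h⟩
      rw [Transcendental, not_not] at h1
      exact h1.isIntegral
    obtain ⟨Sg, hSg⟩ := C.finitely_generated
    haveI hfd1 : FiniteDimensional k (IntermediateField.adjoin k (Sg : Set F)) :=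
      IntermediateField.finiteDimensional_adjoin (fun x _ => hall x)
    rw [hSg] at hfd1
    haveI : FiniteDimensional k F :=
      Module.Finite.equiv (IntermediateField.topEquiv : (⊤ : IntermediateField k F) ≃ₐ[k] F).toLinearEquiv
    exact FiniteDimensional.finiteDimensional_submodule
      (Subalgebra.toSubmodule (algCl k F).toSubalgebra)


/-- Let `V_•` be a graded linear series on a regular projective curve `X`
over `k` (a graded sub-`k`-algebra of `Rat(X)[T]` with `V_0 = k`, some `V_n ≠ 0` for
`n ≥ 1`, and `V_n ⊆ H⁰(nD)` for a fixed ℝ-divisor `D`). Then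
`ℕ(V_•) = {n ≥ 1 : V_n ≠ 0}` is a sub-semigroup of `(ℕ_{≥1},+)`, and for all sufficiently
large `n ∈ ℕ(V_•)` the field `k(V_n)` generated by ratios of nonzero elements of `V_n`
equals `k(V_•)`. -/
theorem gradedLinearSeries_semigroup_and_stable_field
    (C : CurveData k F P) (V : ℕ → Submodule k F)
    (hV0 : V 0 = 1)
    (hmul : ∀ m n : ℕ, ∀ f ∈ V m, ∀ g ∈ V n, f * g ∈ V (m + n))
    (hne : ∃ n : ℕ, 1 ≤ n ∧ V n ≠ ⊥)
    (hbound : ∃ D : P → ℝ, (Function.support D).Finite ∧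
      ∀ n : ℕ, V n ≤ C.H0 (fun x => (n : ℝ) * D x)) :
    (∀ m n : ℕ, (1 ≤ m ∧ V m ≠ ⊥) → (1 ≤ n ∧ V n ≠ ⊥) → (1 ≤ m + n ∧ V (m + n) ≠ ⊥)) ∧
    ∃ N : ℕ, ∀ n ≥ N, 1 ≤ n → V n ≠ ⊥ →
      IntermediateField.adjoin k (ratioSet (V n))
        = IntermediateField.adjoin k (⋃ m ∈ {m : ℕ | 1 ≤ m}, ratioSet (V m)) := by
  classical
  set S : Set ℕ := {n | 1 ≤ n ∧ V n ≠ ⊥} with hSdef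
  set Kf : ℕ → IntermediateField k F := fun n => IntermediateField.adjoin k (ratioSet (V n))
    with hKf
  have hexists : ∀ {n : ℕ}, V n ≠ ⊥ → ∃ h : F, h ∈ V n ∧ h ≠ 0 := fun hn =>
    Submodule.exists_mem_ne_zero_of_ne_bot hn
  have hsemi : ∀ m ∈ S, ∀ n ∈ S, m + n ∈ S := by
    intro m hm n hn
    have hm1 := hm.1
    have hn1 := hn.1
    obtain ⟨f, hf, hf0⟩ := hexists hm.2
    obtain ⟨g, hg, hg0⟩ := hexists hn.2
    refine ⟨by omega, ?_⟩
    intro hbot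
    have hfg : f * g ∈ V (m + n) := hmul m n f hf g hg
    rw [hbot] at hfg
    exact (mul_ne_zero hf0 hg0) ((Submodule.mem_bot k).mp hfg)
  have hmono : ∀ a : ℕ, ∀ b ∈ S, Kf a ≤ Kf (a + b) := by
    intro a b hb
    apply IntermediateField.adjoin_le_iff.mpr
    rintro r ⟨f, hf, g, hg, hf0, hg0, rfl⟩
    obtain ⟨h, hh, hh0⟩ := hexists hb.2
    have heq : f / g = (f * h) / (g * h) := by rw [mul_div_mul_right _ _ hh0]
    rw [heq]
    apply IntermediateField.subset_adjoin
    exact ⟨f * h, hmul a b f hf h hh, g * h, hmul a b g hg h hh,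
      mul_ne_zero hf0 hh0, mul_ne_zero hg0 hh0, rfl⟩
  have hempty : ∀ {n : ℕ}, V n = ⊥ → ratioSet (V n) = ∅ := by
    intro n hn
    ext r
    simp only [Set.mem_empty_iff_false, iff_false]
    rintro ⟨f, hf, g, hg, hf0, hg0, rfl⟩
    rw [hn] at hf
    exact hf0 ((Submodule.mem_bot k).mp hf)
  have hSne : S.Nonempty := by
    obtain ⟨n', h1, h2⟩ := hne
    exact ⟨n', h1, h2⟩
  -- a maximal member of the family
  have hmax : ∃ nstar ∈ S, ∀ m ∈ S, Kf m ≤ Kf nstar := by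
    by_cases htr : ∃ n ∈ S, ∃ u ∈ ratioSet (V n), Transcendental k u
    · obtain ⟨n₁, hn₁, u, huR, hu⟩ := htr
      set E := IntermediateField.adjoin k {u} with hE
      haveI hfdEF : FiniteDimensional E F := by
        obtain ⟨Sg, hSg⟩ := C.finitely_generated
        haveI h1 : FiniteDimensional E (IntermediateField.adjoin E (Sg : Set F)) :=
          IntermediateField.finiteDimensional_adjoin
            (fun x _ => (aux_alg_adjoin C hu x).isIntegral)
        have h2 : IntermediateField.adjoin (↥E) (Sg : Set F) = ⊤ := by
          rw [eq_top_iff]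
          intro x _
          have hx : x ∈ IntermediateField.adjoin k (Sg : Set F) := by rw [hSg]; trivial
          have hle : IntermediateField.adjoin k (Sg : Set F) ≤
              (IntermediateField.adjoin (↥E) (Sg : Set F)).restrictScalars k :=
            IntermediateField.adjoin_le_iff.mpr
              (fun y hy => IntermediateField.subset_adjoin (↥E) (Sg : Set F) hy)
          exact hle hx
        rw [h2] at h1
        exact Module.Finite.equiv
          (IntermediateField.topEquiv : (⊤ : IntermediateField (↥E) F) ≃ₐ[↥E] F).toLinearEquiv
      have huKf : ∀ m ∈ S, E ≤ Kf (n₁ + m) := by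
        intro m hm
        rw [hE]
        apply IntermediateField.adjoin_le_iff.mpr
        intro y hy
        rw [Set.mem_singleton_iff] at hy
        subst hy
        exact hmono n₁ m hm (IntermediateField.subset_adjoin _ _ huR)
      set W : ℕ → Submodule (↥E) F := fun n => Submodule.span (↥E) ((Kf (n₁ + n) : Set F))
        with hW
      haveI hfT : Module.Finite (↥E) (⊤ : Submodule (↥E) F) :=
        Module.Finite.equiv (Submodule.topEquiv (R := ↥E) (M := F)).symm
      obtain ⟨n₀, hn₀S, hmaxW⟩ := aux_stabilize (⊤ : Submodule (↥E) F) hfT W S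
        (fun n _ => le_top) hsemi
        (by
          intro m hm n hn
          apply Submodule.span_mono
          have := hmono (n₁ + m) n hn
          rw [add_assoc] at this
          exact this)
        hSne
      refine ⟨n₁ + n₀, hsemi n₁ hn₁ n₀ hn₀S, ?_⟩
      intro m hm
      set K' : Submodule (↥E) F :=
        { carrier := (Kf (n₁ + n₀) : Set F)
          add_mem' := fun ha hb => add_mem ha hb
          zero_mem' := zero_mem _
          smul_mem' := by
            intro e x hx
            have he : (e : F) ∈ Kf (n₁ + n₀) := huKf n₀ hn₀S e.2
            have heq : e • x = (e : F) * x := by rw [Algebra.smul_def]; rfl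
            simp only [SetLike.mem_coe] at hx ⊢
            rw [heq]
            exact mul_mem he hx } with hK'
      have hspan : Submodule.span (↥E) ((Kf (n₁ + n₀) : Set F)) ≤ K' :=
        Submodule.span_le.mpr (fun x hx => hx)
      intro x hx
      have h1 : x ∈ Kf (m + n₁) := hmono m n₁ hn₁ hx
      have h2 : x ∈ W m := by
        apply Submodule.subset_span
        rw [add_comm n₁ m]
        exact h1
      have h3 : x ∈ W n₀ := hmaxW m hm h2
      exact hspan h3
    · push_neg at htr
      haveI := aux_algclosure_finite C
      have hKle : ∀ n ∈ S, Kf n ≤ algCl k F := by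
        intro n hn
        apply IntermediateField.adjoin_le_iff.mpr
        intro r hr
        have h1 := htr n hn r hr
        rw [Transcendental, not_not] at h1
        exact mem_algCl_of_isIntegral h1.isIntegral
      set W : ℕ → Submodule k F := fun n => Subalgebra.toSubmodule (Kf n).toSubalgebra with hW
      have hfT : Module.Finite k (Subalgebra.toSubmodule (algCl k F).toSubalgebra) :=
        aux_algclosure_finite C
      obtain ⟨n₀, hn₀S, hmaxW⟩ := aux_stabilize
        (Subalgebra.toSubmodule (algCl k F).toSubalgebra) hfT W S
        (fun n hn x hx => hKle n hn hx) hsemi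
        (fun m hm n hn x hx => hmono m n hn hx) hSne
      exact ⟨n₀, hn₀S, fun m hm x hx => hmaxW m hm hx⟩
  obtain ⟨n₂, hn₂S, hmax2⟩ := hmax
  obtain ⟨e, N₁, hepos, hedvd, hemem⟩ :=
    aux_nat_semigroup S (fun a ha => ha.1) hsemi hSne
  set q := e * (N₁ + 1) with hq
  have hqS : q ∈ S := by
    apply hemem
    · calc N₁ ≤ N₁ + 1 := by omega
        _ ≤ e * (N₁ + 1) := Nat.le_mul_of_pos_left _ hepos
    · exact ⟨N₁ + 1, rfl⟩
  set sstar := n₂ + q with hsstar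
  have hsstarS : sstar ∈ S := hsemi n₂ hn₂S q hqS
  have hKmax : ∀ m ∈ S, Kf m ≤ Kf sstar := fun m hm =>
    (hmax2 m hm).trans (hmono n₂ q hqS)
  constructor
  · intro m n hm hn
    exact hsemi m hm n hn
  · refine ⟨sstar + N₁, ?_⟩
    intro n hn h1 hVn
    have hnS : n ∈ S := ⟨h1, hVn⟩
    have hslen : sstar ≤ n := le_trans (Nat.le_add_right _ _) hn
    have hd : n - sstar ∈ S := by
      apply hemem
      · omega
      · exact Nat.dvd_sub (hedvd n hnS) (hedvd sstar hsstarS)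
    have hup : Kf sstar ≤ Kf n := by
      have h2 := hmono sstar (n - sstar) hd
      rwa [Nat.add_sub_cancel' hslen] at h2
    apply le_antisymm
    · apply IntermediateField.adjoin.mono
      intro r hr
      exact Set.mem_biUnion h1 hr
    · apply IntermediateField.adjoin_le_iff.mpr
      intro r hr
      simp only [Set.mem_iUnion] at hr
      obtain ⟨m, hm1, hrm⟩ := hr
      by_cases hVm : V m = ⊥
      · rw [hempty hVm] at hrm
        exact absurd hrm (Set.notMem_empty r)
      · have h2 : r ∈ Kf m := IntermediateField.subset_adjoin _ _ hrm
        exact hup (hKmax m ⟨hm1, hVm⟩ h2)
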